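/- arXiv:2302.02960 — 2 statements merged into one kernel-verified Lean document; each statement's English description precedes it below -/
import Mathlib

section
/- With the notation of the previous statement, listing the reversed split sizes as (g_1',…,g_m') and reversed block counts (k_0',…,k_m'), the total number of splitting sequences of {1,…,k} with ordered split sizes (g_1,…,g_m) equals Π_{i=1}^m C(k_i', g_i'), the product of binomial coefficients, where going backwards each step merges g_i' of the existing k_i' blocks into one. -/
open Finset

variable {k : ℕ}

/-- One splitting step: `R` is obtained from `Q` by splitting one block of `Q`
into `h` parts. -/
def SplitStep (h : ℕ) (Q R : Finpartition (Finset.univ : Finset (Fin k))) : Prop :=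
  ∃ b ∈ Q.parts, ∃ P : Finpartition b, P.parts.card = h ∧
    R.parts = (Q.parts.erase b) ∪ P.parts

lemma erase_inter_parts {Q : Finpartition (Finset.univ : Finset (Fin k))}
    {b : Finset (Fin k)} (hb : b ∈ Q.parts) (P : Finpartition b)
    {t : Finset (Fin k)} (ht : t ∈ Q.parts.erase b) (ht' : t ∈ P.parts) : False := by
  have htb : t ≠ b := (Finset.mem_erase.1 ht).1
  have htQ : t ∈ Q.parts := (Finset.mem_erase.1 ht).2
  have hdisj : Disjoint t b := Q.disjoint htQ hb htb
  have hle : t ≤ b := P.le ht'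
  exact P.bot_notMem (hdisj.eq_bot_of_le hle ▸ ht')

lemma SplitStep.card_eq {h : ℕ} {Q R : Finpartition (Finset.univ : Finset (Fin k))}
    (hs : SplitStep h Q R) : R.parts.card + 1 = Q.parts.card + h := by
  obtain ⟨b, hb, P, hP, hparts⟩ := hs
  have hdisj : Disjoint (Q.parts.erase b) P.parts := by
    rw [Finset.disjoint_left]
    exact fun t ht ht' => erase_inter_parts hb P ht ht'
  have h1 : R.parts.card = Q.parts.card - 1 + h := by
    rw [hparts, Finset.card_union_of_disjoint hdisj, Finset.card_erase_of_mem hb, hP]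
  have h2 : 1 ≤ Q.parts.card := Finset.card_pos.2 ⟨b, hb⟩
  omega

lemma sup_not_mem {R : Finpartition (Finset.univ : Finset (Fin k))}
    {S : Finset (Finset (Fin k))} (hS : S ⊆ R.parts) (hc : 2 ≤ S.card) :
    S.sup id ∉ R.parts := by
  intro hmem
  obtain ⟨s, hs, s', hs', hss⟩ := Finset.one_lt_card.1 hc
  have key : ∀ t ∈ S, t = S.sup id := by
    intro t ht
    by_contra hne
    have hd : Disjoint t (S.sup id) := R.disjoint (hS ht) hmem hne
    have : t = ⊥ := hd.eq_bot_of_le (Finset.le_sup (f := id) ht)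
    exact R.bot_notMem (this ▸ hS ht)
  exact hss ((key s hs).trans (key s' hs').symm)

/-- Merging a set `S` of blocks of `R` into one. -/
def mergeP (R : Finpartition (Finset.univ : Finset (Fin k)))
    (S : Finset (Finset (Fin k))) (hS : S ⊆ R.parts) (hc : 2 ≤ S.card) :
    Finpartition (Finset.univ : Finset (Fin k)) where
  parts := (R.parts \ S) ∪ {S.sup id}
  supIndep := by
    rw [Finset.supIndep_iff_pairwiseDisjoint]
    intro x hx y hy hxy
    simp only [Finset.coe_union, Finset.coe_sdiff, Finset.coe_singleton, Set.mem_union,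
      Set.mem_diff, Set.mem_singleton_iff, Finset.mem_coe] at hx hy
    have hdS : ∀ t, t ∈ R.parts → t ∉ S → Disjoint t (S.sup id) := by
      intro t ht htS
      rw [Finset.disjoint_sup_right]
      intro i hi
      exact R.disjoint ht (hS hi) (fun he => htS (he ▸ hi))
    rcases hx with ⟨hx1, hx2⟩ | rfl <;> rcases hy with ⟨hy1, hy2⟩ | rfl
    · exact R.disjoint hx1 hy1 hxy
    · exact hdS x hx1 hx2
    · exact (hdS y hy1 hy2).symm
    · exact absurd rfl hxy
  sup_parts := by
    rw [Finset.sup_union, Finset.sup_singleton, id, ← Finset.sup_union,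
      Finset.sdiff_union_of_subset hS, R.sup_parts]
  bot_notMem := by
    rw [Finset.mem_union, Finset.mem_sdiff, Finset.mem_singleton]
    rintro (⟨h1, _⟩ | h1)
    · exact R.bot_notMem h1
    · obtain ⟨s, hs⟩ := Finset.card_pos.1 (by omega : 0 < S.card)
      have : s ≤ (⊥ : Finset (Fin k)) := h1 ▸ Finset.le_sup (f := id) hs
      exact R.bot_notMem ((le_bot_iff.1 this) ▸ hS hs)

lemma mergeP_splitstep (R : Finpartition (Finset.univ : Finset (Fin k)))
    (S : Finset (Finset (Fin k))) (hS : S ⊆ R.parts) (hc : 2 ≤ S.card)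
    {h : ℕ} (hcard : S.card = h) :
    SplitStep h (mergeP R S hS hc) R := by
  subst hcard
  refine ⟨S.sup id, ?_, R.ofSubset hS rfl, rfl, ?_⟩
  · exact Finset.mem_union_right _ (Finset.mem_singleton_self _)
  · have hb : S.sup id ∉ R.parts \ S := fun h => sup_not_mem hS hc (Finset.mem_sdiff.1 h).1
    show R.parts = (((R.parts \ S) ∪ {S.sup id}).erase (S.sup id)) ∪ S
    rw [Finset.erase_union_distrib, Finset.erase_singleton,
      Finset.erase_eq_of_notMem hb, Finset.union_empty, Finset.sdiff_union_of_subset hS]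

lemma mergeP_parts_sdiff (R : Finpartition (Finset.univ : Finset (Fin k)))
    (S : Finset (Finset (Fin k))) (hS : S ⊆ R.parts) (hc : 2 ≤ S.card) :
    R.parts \ (mergeP R S hS hc).parts = S := by
  have hb : S.sup id ∉ R.parts := sup_not_mem hS hc
  ext t
  simp only [mergeP, Finset.mem_sdiff, Finset.mem_union, Finset.mem_singleton, not_or,
    Finset.mem_sdiff, not_and, not_not]
  constructor
  · rintro ⟨ht, h1, _⟩
    exact h1 ht
  · intro ht
    exact ⟨hS ht, fun h => ht, fun h => hb (h ▸ hS ht)⟩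

/-- Backward-step counting: the number of `Q` one split before `R`. -/
lemma card_splitstep (h : ℕ) (hh : 2 ≤ h) (R : Finpartition (Finset.univ : Finset (Fin k))) :
    Nat.card {Q : Finpartition (Finset.univ : Finset (Fin k)) // SplitStep h Q R}
      = R.parts.card.choose h := by
  classical
  let f : (R.parts.powersetCard h) → {Q : Finpartition (Finset.univ : Finset (Fin k)) // SplitStep h Q R} :=
    fun S =>
      ⟨mergeP R S.1 (Finset.mem_powersetCard.1 S.2).1
          (by rw [(Finset.mem_powersetCard.1 S.2).2]; exact hh),
        mergeP_splitstep R S.1 (Finset.mem_powersetCard.1 S.2).1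
          (by rw [(Finset.mem_powersetCard.1 S.2).2]; exact hh)
          (Finset.mem_powersetCard.1 S.2).2⟩
  have hinj : Function.Injective f := by
    rintro ⟨S1, h1⟩ ⟨S2, h2⟩ hf
    have key := congrArg (fun Q : {Q // SplitStep h Q R} => R.parts \ Q.1.parts) hf
    simp only [f] at key
    rw [mergeP_parts_sdiff, mergeP_parts_sdiff] at key
    exact Subtype.ext key
  have hsurj : Function.Surjective f := by
    rintro ⟨Q, hQ⟩
    obtain ⟨b, hb, P, hPcard, hparts⟩ := hQ
    have hS : P.parts ⊆ R.parts := by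
      rw [hparts]; exact Finset.subset_union_right
    have hmem : P.parts ∈ R.parts.powersetCard h :=
      Finset.mem_powersetCard.2 ⟨hS, hPcard⟩
    refine ⟨⟨P.parts, hmem⟩, ?_⟩
    apply Subtype.ext
    apply Finpartition.ext
    show (R.parts \ P.parts) ∪ {P.parts.sup id} = Q.parts
    have hsup : P.parts.sup id = b := P.sup_parts
    have hdiff : R.parts \ P.parts = Q.parts.erase b := by
      rw [hparts]
      ext t
      simp only [Finset.mem_sdiff, Finset.mem_union]
      constructor
      · rintro ⟨h1 | h1, h2⟩
        · exact h1
        · exact absurd h1 h2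
      · intro ht
        exact ⟨Or.inl ht, fun ht' => erase_inter_parts hb P ht ht'⟩
    rw [hsup, hdiff, Finset.union_comm, ← Finset.insert_eq, Finset.insert_erase hb]
  rw [Nat.card_congr (Equiv.ofBijective f ⟨hinj, hsurj⟩).symm, Nat.card_eq_finsetCard,
    Finset.card_powersetCard]


lemma chain_count (m : ℕ) (g : Fin m → ℕ) (hg : ∀ i, 2 ≤ g i)
    (R : Finpartition (Finset.univ : Finset (Fin k))) :
    Nat.card {β : Fin (m + 1) → Finpartition (Finset.univ : Finset (Fin k)) //
        β (Fin.last m) = R ∧ ∀ i : Fin m, SplitStep (g i) (β i.castSucc) (β i.succ)}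
      = ∏ i : Fin m,
          Nat.choose (R.parts.card - ∑ j ∈ Finset.univ.filter (fun j => i < j), (g j - 1))
            (g i) := by
  induction m generalizing R with
  | zero =>
    haveI : Unique {β : Fin 1 → Finpartition (Finset.univ : Finset (Fin k)) //
        β (Fin.last 0) = R ∧ ∀ i : Fin 0, SplitStep (g i) (β i.castSucc) (β i.succ)} :=
      { default := ⟨fun _ => R, rfl, fun i => i.elim0⟩
        uniq := by
          rintro ⟨β, h1, _⟩
          apply Subtype.ext
          funext i
          show β i = R
          have hi : i = Fin.last 0 := Subsingleton.elim _ _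
          rw [hi, h1] }
    rw [Nat.card_unique]
    simp
  | succ m ih =>
    have e : {β : Fin (m + 2) → Finpartition (Finset.univ : Finset (Fin k)) //
          β (Fin.last (m + 1)) = R ∧
          ∀ i : Fin (m + 1), SplitStep (g i) (β i.castSucc) (β i.succ)}
        ≃ (Q : {Q : Finpartition (Finset.univ : Finset (Fin k)) //
              SplitStep (g (Fin.last m)) Q R}) ×
            {γ : Fin (m + 1) → Finpartition (Finset.univ : Finset (Fin k)) //
              γ (Fin.last m) = Q.1 ∧
              ∀ i : Fin m, SplitStep (g i.castSucc) (γ i.castSucc) (γ i.succ)} :=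
      { toFun := fun ⟨β, h1, h2⟩ =>
          ⟨⟨β (Fin.last m).castSucc, by
              have h := h2 (Fin.last m)
              rwa [Fin.succ_last, h1] at h⟩,
            ⟨Fin.init β, rfl, fun i => by
              simpa [Fin.init, Fin.succ_castSucc, -Fin.castSucc_succ] using h2 i.castSucc⟩⟩
        invFun := fun ⟨⟨Q, hQ⟩, ⟨γ, hγ1, hγ2⟩⟩ =>
          ⟨Fin.snoc γ R, by simp, fun i => by
            induction i using Fin.lastCases with
            | last => simpa [Fin.succ_last, hγ1] using hQ
            | cast j => simpa [Fin.succ_castSucc, -Fin.castSucc_succ] using hγ2 j⟩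
        left_inv := by
          rintro ⟨β, h1, h2⟩
          apply Subtype.ext
          show Fin.snoc (Fin.init β) R = β
          rw [← h1]
          exact Fin.snoc_init_self β
        right_inv := by
          rintro ⟨⟨Q, hQ⟩, ⟨γ, hγ1, hγ2⟩⟩
          have e1 : (Fin.snoc γ R : Fin (m + 2) → Finpartition (Finset.univ : Finset (Fin k)))
              (Fin.last m).castSucc = Q := by
            rw [Fin.snoc_castSucc]; exact hγ1
          apply Sigma.ext
          · exact Subtype.ext e1
          · rw [Subtype.heq_iff_coe_eq (fun x => by
              change (x (Fin.last m) = (Fin.snoc γ R : Fin (m + 2) → Finpartition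
                  (Finset.univ : Finset (Fin k))) (Fin.last m).castSucc ∧ _) ↔
                (x (Fin.last m) = Q ∧ _)
              rw [e1])]
            exact Fin.init_snoc (α := fun _ : Fin (m + 2) =>
              Finpartition (Finset.univ : Finset (Fin k))) R γ }
    rw [Nat.card_congr e]
    haveI : Fintype {Q : Finpartition (Finset.univ : Finset (Fin k)) //
        SplitStep (g (Fin.last m)) Q R} := Fintype.ofFinite _
    haveI : ∀ (Q : {Q : Finpartition (Finset.univ : Finset (Fin k)) //
        SplitStep (g (Fin.last m)) Q R}),
        Fintype {γ : Fin (m + 1) → Finpartition (Finset.univ : Finset (Fin k)) //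
          γ (Fin.last m) = Q.1 ∧
          ∀ i : Fin m, SplitStep (g i.castSucc) (γ i.castSucc) (γ i.succ)} :=
      fun Q => Fintype.ofFinite _
    rw [Nat.card_eq_fintype_card, Fintype.card_sigma]
    have hcard : ∀ Q : {Q : Finpartition (Finset.univ : Finset (Fin k)) //
        SplitStep (g (Fin.last m)) Q R},
        Q.1.parts.card = R.parts.card + 1 - g (Fin.last m) := by
      intro Q
      have := Q.2.card_eq
      omega
    have hsummand : ∀ Q : {Q : Finpartition (Finset.univ : Finset (Fin k)) //
        SplitStep (g (Fin.last m)) Q R},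
        Fintype.card {γ : Fin (m + 1) → Finpartition (Finset.univ : Finset (Fin k)) //
          γ (Fin.last m) = Q.1 ∧
          ∀ i : Fin m, SplitStep (g i.castSucc) (γ i.castSucc) (γ i.succ)}
        = ∏ i : Fin m,
            Nat.choose ((R.parts.card + 1 - g (Fin.last m))
              - ∑ j ∈ Finset.univ.filter (fun j => i < j), (g j.castSucc - 1))
              (g i.castSucc) := by
      intro Q
      rw [← Nat.card_eq_fintype_card, ih (fun i => g i.castSucc) (fun i => hg i.castSucc) Q.1,
        hcard Q]
    rw [Finset.sum_congr rfl (fun Q _ => hsummand Q), Finset.sum_const, Finset.card_univ,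
      ← Nat.card_eq_fintype_card, card_splitstep (g (Fin.last m)) (hg (Fin.last m)) R,
      smul_eq_mul]
    rw [Fin.prod_univ_castSucc]
    have hlast : (Finset.univ.filter (fun j => Fin.last m < j) : Finset (Fin (m + 1))) = ∅ := by
      ext j
      simp [(Fin.le_last j).not_gt]
    have hstep : ∀ i : Fin m,
        (∑ j ∈ Finset.univ.filter (fun j => i.castSucc < j), (g j - 1) : ℕ)
          = (g (Fin.last m) - 1)
            + ∑ j ∈ Finset.univ.filter (fun j => i < j), (g j.castSucc - 1) := by
      intro i
      rw [Finset.sum_filter, Finset.sum_filter, Fin.sum_univ_castSucc]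
      simp only [Fin.castSucc_lt_castSucc_iff, Fin.castSucc_lt_last, if_true]
      ring
    have hfac : ∀ i : Fin m,
        Nat.choose (R.parts.card
            - ∑ j ∈ Finset.univ.filter (fun j => i.castSucc < j), (g j - 1)) (g i.castSucc)
          = Nat.choose ((R.parts.card + 1 - g (Fin.last m))
            - ∑ j ∈ Finset.univ.filter (fun j => i < j), (g j.castSucc - 1)) (g i.castSucc) := by
      intro i
      rw [hstep i]
      congr 1
      have := hg (Fin.last m)
      omega
    rw [hlast]
    simp only [Finset.sum_empty, Nat.sub_zero]
    rw [Finset.prod_congr rfl (fun i _ => hfac i)]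
    ring

lemma chain_parts_card (m : ℕ) (g : Fin m → ℕ) (hg : ∀ i, 2 ≤ g i)
    (β : Fin (m + 1) → Finpartition (Finset.univ : Finset (Fin k)))
    (hs : ∀ i : Fin m, SplitStep (g i) (β i.castSucc) (β i.succ)) :
    (β (Fin.last m)).parts.card = (β 0).parts.card + ∑ i, (g i - 1) := by
  induction m with
  | zero => simp
  | succ m ih =>
    have h1 := ih (fun i => g i.castSucc) (fun i => hg i.castSucc) (fun i => β i.castSucc)
      (fun i => by simpa [Fin.succ_castSucc, -Fin.castSucc_succ] using hs i.castSucc)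
    have h2 := (hs (Fin.last m)).card_eq
    rw [Fin.succ_last] at h2
    rw [Fin.sum_univ_castSucc]
    have h3 : ((0 : Fin (m + 1)).castSucc : Fin (m + 2)) = 0 := rfl
    rw [h3] at h1
    have h4 := hg (Fin.last m)
    simp only [Nat.succ_eq_add_one] at h1 h2 ⊢
    omega

lemma eq_bot_of_singletons (P : Finpartition (Finset.univ : Finset (Fin k)))
    (h : ∀ b ∈ P.parts, b.card = 1) : P = ⊥ := by
  apply Finpartition.ext
  rw [Finpartition.parts_bot]
  ext t
  simp only [Finset.mem_map, Function.Embedding.coeFn_mk]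
  constructor
  · intro ht
    obtain ⟨a, ha⟩ := Finset.card_eq_one.1 (h t ht)
    exact ⟨a, Finset.mem_univ a, ha.symm⟩
  · rintro ⟨a, -, rfl⟩
    obtain ⟨u, hu, hau⟩ := P.exists_mem (Finset.mem_univ a)
    obtain ⟨a', ha'⟩ := Finset.card_eq_one.1 (h u hu)
    have : u = {a} := by
      rw [ha'] at hau ⊢
      rw [Finset.mem_singleton.1 hau]
    exact this ▸ hu

/-- Backwards counting: the number of splitting sequences of `{1,…,k}` with
ordered split sizes `(g₁,…,g_m)` equals the product of binomial coefficients
`∏ᵢ C(kᵢ', gᵢ')`, where primes denote reversal of the index order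
(`kᵢ' = k_{m-i+1}`, `gᵢ' = g_{m-i+1}`), each backwards step merging `gᵢ'` of
the existing `kᵢ'` blocks into one. -/
theorem card_splitting_sequences_binomial
    (k m : ℕ) (hk : 2 ≤ k)
    (g : Fin m → ℕ) (hg : ∀ i, 2 ≤ g i)
    (hsum : ∑ i, (g i - 1) = k - 1) :
    Nat.card {β : Fin (m + 1) → Finpartition (Finset.univ : Finset (Fin k)) //
        (β 0).parts = {Finset.univ} ∧
        (∀ b ∈ (β (Fin.last m)).parts, b.card = 1) ∧
        (∀ i : Fin m, ∃ b ∈ (β i.castSucc).parts, ∃ P : Finpartition b,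
          P.parts.card = g i ∧
          (β i.succ).parts = ((β i.castSucc).parts.erase b) ∪ P.parts)}
      = ∏ i : Fin m,
          Nat.choose
            (1 + ∑ j ∈ Finset.univ.filter (fun j => j ≤ i.rev), (g j - 1))
            (g i.rev) := by
  have hiff : ∀ β : Fin (m + 1) → Finpartition (Finset.univ : Finset (Fin k)),
      ((β 0).parts = {Finset.univ} ∧ (∀ b ∈ (β (Fin.last m)).parts, b.card = 1) ∧
        (∀ i : Fin m, ∃ b ∈ (β i.castSucc).parts, ∃ P : Finpartition b,
          P.parts.card = g i ∧ (β i.succ).parts = ((β i.castSucc).parts.erase b) ∪ P.parts))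
      ↔ (β (Fin.last m) = ⊥ ∧ ∀ i : Fin m, SplitStep (g i) (β i.castSucc) (β i.succ)) := by
    intro β
    constructor
    · rintro ⟨h0, hlast, hstep⟩
      exact ⟨eq_bot_of_singletons _ hlast, hstep⟩
    · rintro ⟨hlast, hstep⟩
      refine ⟨?_, ?_, hstep⟩
      · have hc := chain_parts_card m g hg β hstep
        rw [hlast, Finpartition.card_bot, Finset.card_univ, Fintype.card_fin, hsum] at hc
        have h1 : (β 0).parts.card = 1 := by omega
        obtain ⟨b, hb⟩ := Finset.card_eq_one.1 h1
        have hsup := (β 0).sup_parts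
        rw [hb, Finset.sup_singleton] at hsup
        rw [hb]
        rw [show (id b : Finset (Fin k)) = b from rfl] at hsup
        rw [hsup]
      · intro b hb
        rw [hlast] at hb
        obtain ⟨a, -, rfl⟩ := Finpartition.mem_bot_iff.1 hb
        simp
  rw [Nat.card_congr (Equiv.subtypeEquivRight hiff), chain_count m g hg ⊥,
    Finpartition.card_bot, Finset.card_univ, Fintype.card_fin]
  rw [Fintype.prod_equiv Fin.revPerm
    (fun i => Nat.choose (1 + ∑ j ∈ Finset.univ.filter (fun j => j ≤ i.rev), (g j - 1)) (g i.rev))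
    (fun i => Nat.choose (1 + ∑ j ∈ Finset.univ.filter (fun j => j ≤ i), (g j - 1)) (g i))
    (fun i => by simp)]
  refine Finset.prod_congr rfl (fun i _ => ?_)
  congr 1
  have hsplit := Finset.sum_filter_add_sum_filter_not Finset.univ (fun j => j ≤ i)
    (fun j => g j - 1)
  simp only [not_le] at hsplit
  rw [hsum] at hsplit
  omega
end

section
/- For real α ∈ (1,2) and θ > 0, with f_α(θ) := 1 − (1 + θ^{1−α})^{−1/(α−1)}, the third derivative satisfies −f_α'''(θ) = α / ( θ^2 (1 + θ^{α−1})^{3 + 1/(α−1)} ) · ( (α+1) θ^{2(α−1)} + (2−α) θ^{α−1} ). -/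
open Real Filter

lemma aux_u (α q x : ℝ) (hx : 0 < x) :
    HasDerivAt (fun y : ℝ => (1 + y ^ (1 - α)) ^ q)
      (q * (1 + x ^ (1 - α)) ^ (q - 1) * ((1 - α) * x ^ (1 - α - 1))) x := by
  have hu : (0:ℝ) < 1 + x ^ (1 - α) := by positivity
  have h1 : HasDerivAt (fun y : ℝ => 1 + y ^ (1 - α)) ((1 - α) * x ^ (1 - α - 1)) x := by
    simpa using (Real.hasDerivAt_rpow_const (p := 1 - α) (Or.inl hx.ne')).const_add 1
  exact (Real.hasDerivAt_rpow_const (p := q) (Or.inl hu.ne')).comp x h1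

lemma hD0 (α : ℝ) (hα1 : 1 < α) (x : ℝ) (hx : 0 < x) :
    HasDerivAt (fun y : ℝ => 1 - (1 + y ^ (1 - α)) ^ (-(1 / (α - 1))))
      (-(x ^ (-α) * (1 + x ^ (1 - α)) ^ (-(1 / (α - 1)) - 1))) x := by
  have hne : α - 1 ≠ 0 := sub_ne_zero.mpr (ne_of_gt hα1)
  have h := (aux_u α (-(1 / (α - 1))) x hx).const_sub 1
  refine h.congr_deriv (Eq.symm ?_)
  rw [show (1 - α - 1 : ℝ) = -α by ring]
  have hp : (-(1 / (α - 1))) * (1 - α) = 1 := by field_simp; ring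
  linear_combination (x ^ (-α) * (1 + x ^ (1 - α)) ^ (-(1 / (α - 1)) - 1)) * hp

lemma hD1 (α : ℝ) (hα1 : 1 < α) (x : ℝ) (hx : 0 < x) :
    HasDerivAt (fun y : ℝ => -(y ^ (-α) * (1 + y ^ (1 - α)) ^ (-(1 / (α - 1)) - 1)))
      (α * (x ^ (-α - 1) * (1 + x ^ (1 - α)) ^ (-(1 / (α - 1)) - 1))
        - α * (x ^ (-(2 * α)) * (1 + x ^ (1 - α)) ^ (-(1 / (α - 1)) - 2))) x := by
  have hne : α - 1 ≠ 0 := sub_ne_zero.mpr (ne_of_gt hα1)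
  have h := ((Real.hasDerivAt_rpow_const (p := -α) (Or.inl hx.ne')).mul
    (aux_u α (-(1 / (α - 1)) - 1) x hx)).neg
  refine h.congr_deriv (Eq.symm ?_)
  rw [show (1 - α - 1 : ℝ) = -α by ring,
      show (-(1 / (α - 1)) - 1 - 1 : ℝ) = -(1 / (α - 1)) - 2 by ring,
      show (-(2 * α) : ℝ) = -α + -α by ring, Real.rpow_add hx]
  have hq1 : (-(1 / (α - 1)) - 1) * (1 - α) = α := by field_simp; ring
  linear_combination (x ^ (-α) * x ^ (-α) * (1 + x ^ (1 - α)) ^ (-(1 / (α - 1)) - 2)) * hq1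

lemma hD2 (α : ℝ) (hα1 : 1 < α) (x : ℝ) (hx : 0 < x) :
    HasDerivAt (fun y : ℝ =>
        α * (y ^ (-α - 1) * (1 + y ^ (1 - α)) ^ (-(1 / (α - 1)) - 1))
          - α * (y ^ (-(2 * α)) * (1 + y ^ (1 - α)) ^ (-(1 / (α - 1)) - 2)))
      (-(α * (α + 1)) * (x ^ (-α - 2) * (1 + x ^ (1 - α)) ^ (-(1 / (α - 1)) - 1))
        + 3 * α ^ 2 * (x ^ (-(2 * α) - 1) * (1 + x ^ (1 - α)) ^ (-(1 / (α - 1)) - 2))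
        - α * (2 * α - 1) * (x ^ (-(3 * α)) * (1 + x ^ (1 - α)) ^ (-(1 / (α - 1)) - 3))) x := by
  have hne : α - 1 ≠ 0 := sub_ne_zero.mpr (ne_of_gt hα1)
  have h1 := (((Real.hasDerivAt_rpow_const (p := -α - 1) (Or.inl hx.ne')).mul
    (aux_u α (-(1 / (α - 1)) - 1) x hx)).const_mul α)
  have h2 := (((Real.hasDerivAt_rpow_const (p := -(2 * α)) (Or.inl hx.ne')).mul
    (aux_u α (-(1 / (α - 1)) - 2) x hx)).const_mul α)
  have h := h1.sub h2
  refine h.congr_deriv (Eq.symm ?_)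
  rw [show (1 - α - 1 : ℝ) = -α by ring,
      show (-α - 1 - 1 : ℝ) = -α - 2 by ring,
      show (-(1 / (α - 1)) - 1 - 1 : ℝ) = -(1 / (α - 1)) - 2 by ring,
      show (-(1 / (α - 1)) - 2 - 1 : ℝ) = -(1 / (α - 1)) - 3 by ring,
      show (-(2 * α) - 1 : ℝ) = (-α - 1) + -α by ring,
      show (-(3 * α) : ℝ) = -(2 * α) + -α by ring,
      Real.rpow_add hx, Real.rpow_add hx]
  have hq1 : (-(1 / (α - 1)) - 1) * (1 - α) = α := by field_simp; ring
  have hq2 : (-(1 / (α - 1)) - 2) * (1 - α) = 2 * α - 1 := by field_simp; ring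
  linear_combination
    (-(α * (x ^ (-α - 1) * x ^ (-α)) * (1 + x ^ (1 - α)) ^ (-(1 / (α - 1)) - 2))) * hq1
    + (α * (x ^ (-(2 * α)) * x ^ (-α)) * (1 + x ^ (1 - α)) ^ (-(1 / (α - 1)) - 3)) * hq2

/-- For `α ∈ (1,2)` and `θ > 0`, with `f_α(θ) = 1 - (1 + θ^{1-α})^{-1/(α-1)}`:
`-f_α'(θ) = α / (θ² (1 + θ^{α-1})^{3 + 1/(α-1)}) · ((α+1) θ^{2(α-1)} + (2-α) θ^{α-1})`. -/
theorem third_deriv_f_alpha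
    (α : ℝ) (hα : α ∈ Set.Ioo (1 : ℝ) 2) (θ : ℝ) (hθ : 0 < θ) :
    -iteratedDeriv 3 (fun x : ℝ => 1 - (1 + x ^ (1 - α)) ^ (-(1 / (α - 1)))) θ
      = α / (θ ^ (2 : ℕ) * (1 + θ ^ (α - 1)) ^ (3 + 1 / (α - 1))) *
          ((α + 1) * θ ^ (2 * (α - 1)) + (2 - α) * θ ^ (α - 1)) := by
  obtain ⟨hα1, hα2⟩ := hα
  have hne : α - 1 ≠ 0 := sub_ne_zero.mpr (ne_of_gt hα1)
  have hmem : Set.Ioi (0:ℝ) ∈ nhds θ := Ioi_mem_nhds hθ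
  have E1 : deriv (fun x : ℝ => 1 - (1 + x ^ (1 - α)) ^ (-(1 / (α - 1))))
      =ᶠ[nhds θ] (fun y : ℝ => -(y ^ (-α) * (1 + y ^ (1 - α)) ^ (-(1 / (α - 1)) - 1))) :=
    eventuallyEq_of_mem hmem fun x hx => (hD0 α hα1 x hx).deriv
  have E2 : deriv (fun y : ℝ => -(y ^ (-α) * (1 + y ^ (1 - α)) ^ (-(1 / (α - 1)) - 1)))
      =ᶠ[nhds θ] (fun x : ℝ =>
        α * (x ^ (-α - 1) * (1 + x ^ (1 - α)) ^ (-(1 / (α - 1)) - 1))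
          - α * (x ^ (-(2 * α)) * (1 + x ^ (1 - α)) ^ (-(1 / (α - 1)) - 2))) :=
    eventuallyEq_of_mem hmem fun x hx => (hD1 α hα1 x hx).deriv
  have key : iteratedDeriv 3 (fun x : ℝ => 1 - (1 + x ^ (1 - α)) ^ (-(1 / (α - 1)))) θ
      = -(α * (α + 1)) * (θ ^ (-α - 2) * (1 + θ ^ (1 - α)) ^ (-(1 / (α - 1)) - 1))
        + 3 * α ^ 2 * (θ ^ (-(2 * α) - 1) * (1 + θ ^ (1 - α)) ^ (-(1 / (α - 1)) - 2))
        - α * (2 * α - 1) * (θ ^ (-(3 * α)) * (1 + θ ^ (1 - α)) ^ (-(1 / (α - 1)) - 3)) := by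
    rw [show (3:ℕ) = 2 + 1 from rfl, iteratedDeriv_succ,
        iteratedDeriv_succ (n := 1), iteratedDeriv_one]
    calc deriv (deriv (deriv (fun x : ℝ => 1 - (1 + x ^ (1 - α)) ^ (-(1 / (α - 1)))))) θ
        = deriv (deriv (fun y : ℝ =>
            -(y ^ (-α) * (1 + y ^ (1 - α)) ^ (-(1 / (α - 1)) - 1)))) θ := (E1.deriv).deriv_eq
      _ = deriv (fun x : ℝ =>
            α * (x ^ (-α - 1) * (1 + x ^ (1 - α)) ^ (-(1 / (α - 1)) - 1))
              - α * (x ^ (-(2 * α)) * (1 + x ^ (1 - α)) ^ (-(1 / (α - 1)) - 2))) θ := E2.deriv_eq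
      _ = _ := (hD2 α hα1 θ hθ).deriv
  rw [key]
  -- algebra
  have hv : (0:ℝ) < 1 + θ ^ (α - 1) := by positivity
  have huv : (1 + θ ^ (1 - α)) = θ ^ (1 - α) * (1 + θ ^ (α - 1)) := by
    rw [mul_add, mul_one, ← Real.rpow_add hθ, show (1 - α) + (α - 1) = (0:ℝ) by ring,
        Real.rpow_zero]
    ring
  have hk1 : θ ^ (-α - 2) * (1 + θ ^ (1 - α)) ^ (-(1 / (α - 1)) - 1)
      = θ ^ (-(2:ℝ)) * (1 + θ ^ (α - 1)) ^ (-(1 / (α - 1)) - 1) := by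
    rw [huv, Real.mul_rpow (Real.rpow_nonneg hθ.le _) hv.le, ← Real.rpow_mul hθ.le,
        ← mul_assoc, ← Real.rpow_add hθ,
        show (-α - 2) + (1 - α) * (-(1 / (α - 1)) - 1) = (-2:ℝ) by field_simp; ring]
  have hk2 : θ ^ (-(2 * α) - 1) * (1 + θ ^ (1 - α)) ^ (-(1 / (α - 1)) - 2)
      = θ ^ (-(2:ℝ)) * (1 + θ ^ (α - 1)) ^ (-(1 / (α - 1)) - 2) := by
    rw [huv, Real.mul_rpow (Real.rpow_nonneg hθ.le _) hv.le, ← Real.rpow_mul hθ.le,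
        ← mul_assoc, ← Real.rpow_add hθ,
        show (-(2 * α) - 1) + (1 - α) * (-(1 / (α - 1)) - 2) = (-2:ℝ) by field_simp; ring]
  have hk3 : θ ^ (-(3 * α)) * (1 + θ ^ (1 - α)) ^ (-(1 / (α - 1)) - 3)
      = θ ^ (-(2:ℝ)) * (1 + θ ^ (α - 1)) ^ (-(1 / (α - 1)) - 3) := by
    rw [huv, Real.mul_rpow (Real.rpow_nonneg hθ.le _) hv.le, ← Real.rpow_mul hθ.le,
        ← mul_assoc, ← Real.rpow_add hθ,
        show (-(3 * α)) + (1 - α) * (-(1 / (α - 1)) - 3) = (-2:ℝ) by field_simp; ring]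
  rw [hk1, hk2, hk3]
  have hV : (1 + θ ^ (α - 1)) ^ (3 + 1 / (α - 1))
      = ((1 + θ ^ (α - 1)) ^ (-(1 / (α - 1)) - 3))⁻¹ := by
    rw [show (3 + 1 / (α - 1) : ℝ) = -(-(1 / (α - 1)) - 3) by ring, Real.rpow_neg hv.le]
  have hw : (0:ℝ) < (1 + θ ^ (α - 1)) ^ (-(1 / (α - 1)) - 3) := Real.rpow_pos_of_pos hv _
  have hv1 : (1 + θ ^ (α - 1)) ^ (-(1 / (α - 1)) - 1)
      = (1 + θ ^ (α - 1)) ^ (-(1 / (α - 1)) - 3) * (1 + θ ^ (α - 1)) * (1 + θ ^ (α - 1)) := by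
    rw [show (-(1 / (α - 1)) - 1 : ℝ) = (-(1 / (α - 1)) - 3 + 1) + 1 by ring,
        Real.rpow_add hv, Real.rpow_add hv, Real.rpow_one]
  have hv2 : (1 + θ ^ (α - 1)) ^ (-(1 / (α - 1)) - 2)
      = (1 + θ ^ (α - 1)) ^ (-(1 / (α - 1)) - 3) * (1 + θ ^ (α - 1)) := by
    rw [show (-(1 / (α - 1)) - 2 : ℝ) = (-(1 / (α - 1)) - 3) + 1 by ring,
        Real.rpow_add hv, Real.rpow_one]
  have hs2 : θ ^ (2 * (α - 1)) = θ ^ (α - 1) * θ ^ (α - 1) := by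
    rw [show (2 * (α - 1) : ℝ) = (α - 1) + (α - 1) by ring, Real.rpow_add hθ]
  have hθ2 : θ ^ (-(2:ℝ)) = (θ ^ (2:ℕ))⁻¹ := by
    rw [← Real.rpow_natCast θ 2, ← Real.rpow_neg hθ.le]
    norm_num
  rw [hV, hv1, hv2, hs2, hθ2]
  field_simp
  ring
end
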